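/- Suppose λ is a cardinal of uncountable cofinality, T ⊆ ^{<λ}2 is a tree under end-extension such that each level T_ξ = T ∩ ^{ξ}2 is countable, and U is an ultrafilter over a set K that is ν-indecomposable for every uncountable cardinal ν < κ where cf(λ) < κ. Suppose ⟨f_α ∣ α ∈ K⟩ is a family of functions f_α : λ → 2 such that for every ξ < λ, X_ξ := {α ∈ K ∣ f_α ↾ ξ ∈ T_ξ} ∈ U. If cf(λ) > ℵ₀ and U is cf(λ)-indecomposable, then X* := ⋂_{ξ<λ} X_ξ ∈ U; in particular, if the f_α for α ∈ X* are pairwise distinct and X* has more than countably many elements while cf(λ) > ℵ₁, a contradiction arises, since a tree of height λ with countable levels and cf(λ) > ℵ₁ has at most countably many cofinal branches. -/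

import Mathlib

open Set Cardinal

/-- An ultrafilter `U` over `I` is `μ`-decomposable if there is `f : I → μ` such that
`f ⁻¹' H ∉ U` for every `H ⊆ μ` of cardinality `< μ`. -/
def MuDecomposable {I : Type} (U : Ultrafilter I) (μ : Cardinal.{0}) : Prop :=
  ∃ f : I → μ.out, ∀ H : Set μ.out, #H < μ → f ⁻¹' H ∉ U

/-- Suppose `λ` is a cardinal of uncountable cofinality, `T ⊆ ^{<λ}2` is a tree (closed
under restriction) with countable levels, `U` is an ultrafilter over `K` that is
`ν`-indecomposable for every uncountable `ν < κ` where `cf(λ) < κ`, and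
`⟨f_α | α ∈ K⟩` satisfies `X_ξ = {α | f_α ↾ ξ ∈ T_ξ} ∈ U` for all `ξ < λ`.  If
`cf(λ) > ℵ₀` and `U` is `cf(λ)`-indecomposable, then `X* = ⋂_{ξ<λ} X_ξ ∈ U`; in
particular, if the `f_α` for `α ∈ X*` are pairwise distinct, `X*` is uncountable, and
`cf(λ) > ℵ₁`, a contradiction arises. -/
theorem stmt16 {K : Type} (lam κ : Cardinal.{0}) (hlam : aleph0 ≤ lam)
    (hcof : aleph0 < lam.ord.cof) (hcofκ : lam.ord.cof < κ)
    (T : Ordinal.{0} → Set (Ordinal.{0} → Bool))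
    (hTcount : ∀ ξ < lam.ord, (T ξ).Countable)
    (hTtree : ∀ ξ < lam.ord, ∀ ξ' < ξ, ∀ g ∈ T ξ, ∃ g' ∈ T ξ', ∀ η < ξ', g' η = g η)
    (U : Ultrafilter K)
    (hind : ∀ ν : Cardinal.{0}, aleph0 < ν → ν < κ → ¬ MuDecomposable U ν)
    (hindcf : ¬ MuDecomposable U lam.ord.cof)
    (f : K → Ordinal.{0} → Bool)
    (hX : ∀ ξ, ξ < lam.ord → {α : K | ∃ g ∈ T ξ, ∀ η < ξ, g η = f α η} ∈ U) :
    {α : K | ∀ ξ, ξ < lam.ord → ∃ g ∈ T ξ, ∀ η < ξ, g η = f α η} ∈ U ∧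
    (Cardinal.aleph 1 < lam.ord.cof →
      (∀ α β : K,
        (∀ ξ, ξ < lam.ord → ∃ g ∈ T ξ, ∀ η < ξ, g η = f α η) →
        (∀ ξ, ξ < lam.ord → ∃ g ∈ T ξ, ∀ η < ξ, g η = f β η) →
        (∀ η, η < lam.ord → f α η = f β η) → α = β) →
      ¬ {α : K | ∀ ξ, ξ < lam.ord → ∃ g ∈ T ξ, ∀ η < ξ, g η = f α η}.Countable →
      False) := by
  classical
  set X : Ordinal.{0} → Set K := fun ξ => {α : K | ∃ g ∈ T ξ, ∀ η < ξ, g η = f α η}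
    with hXdef
  set Xstar : Set K := {α : K | ∀ ξ, ξ < lam.ord → α ∈ X ξ} with hXstar
  -- X is ⊆-decreasing
  have hmono : ∀ ξ, ξ < lam.ord → ∀ ξ', ξ' ≤ ξ → X ξ ⊆ X ξ' := by
    intro ξ hξ ξ' hle α hα
    rcases eq_or_lt_of_le hle with rfl | hlt
    · exact hα
    · obtain ⟨g, hg, hag⟩ := hα
      obtain ⟨g', hg', hgg'⟩ := hTtree ξ hξ ξ' hlt g hg
      exact ⟨g', hg', fun η hη => (hgg' η hη).trans (hag η (hη.trans hlt))⟩
  have hlimit : Order.IsSuccLimit lam.ord := Cardinal.isSuccLimit_ord hlam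
  -- Part 1
  have h1 : Xstar ∈ U := by
    by_contra hns
    apply hindcf
    -- a cofinal family indexed by (cof lam.ord).out
    obtain ⟨ι, e, hlsub, hmk⟩ := Ordinal.exists_lsub_cof lam.ord
    have hmk' : #ι = #(lam.ord.cof.out) := by rw [hmk, mk_out]
    obtain ⟨eqv⟩ := Cardinal.eq.mp hmk'
    set E : lam.ord.cof.out → Ordinal.{0} := fun i => e (eqv.symm i) with hE
    have hElt : ∀ i, E i < lam.ord := by
      intro i; rw [hE]; simpa [hlsub] using Ordinal.lt_lsub e (eqv.symm i)
    have hEunb : ∀ ξ, ξ < lam.ord → ∃ i, ξ ≤ E i := by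
      intro ξ hξ
      rw [← hlsub] at hξ
      obtain ⟨j, hj⟩ := Ordinal.lt_lsub_iff.mp hξ
      exact ⟨eqv j, by simpa [hE] using hj⟩
    have hne : Nonempty lam.ord.cof.out := by
      rw [← mk_ne_zero_iff, mk_out]
      exact (aleph0_pos.trans hcof).ne'
    have key : ∀ α : K, α ∉ Xstar → ∃ i : lam.ord.cof.out, α ∉ X (E i) := by
      intro α hα
      rw [hXstar, mem_setOf_eq] at hα
      push_neg at hα
      obtain ⟨ξ, hξ, hαξ⟩ := hα
      obtain ⟨i, hi⟩ := hEunb ξ hξ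
      exact ⟨i, fun hmem => hαξ (hmono (E i) (hElt i) ξ hi hmem)⟩
    refine ⟨fun α => if hα : α ∈ Xstar then hne.some else (key α hα).choose, ?_⟩
    intro H hH hU
    -- sup of E over H
    have hsup : iSup (fun j : H => E j.1) < lam.ord :=
      Ordinal.iSup_lt_of_lt_cof hH fun j => hElt j.1
    set σ := iSup (fun j : H => E j.1) with hσ
    have hsub : (fun α => if hα : α ∈ Xstar then hne.some else (key α hα).choose) ⁻¹' H
        ⊆ Xstar ∪ (X σ)ᶜ := by
      intro α hα
      by_cases hmem : α ∈ Xstar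
      · exact Or.inl hmem
      · right
        simp only [mem_preimage, dif_neg hmem] at hα
        have h1 := (key α hmem).choose_spec
        have hle : E (key α hmem).choose ≤ σ := Ordinal.le_iSup _ (⟨_, hα⟩ : H)
        exact fun hmemσ => h1 (hmono σ hsup _ hle hmemσ)
    have : Xstar ∪ (X σ)ᶜ ∈ U := U.toFilter.mem_of_superset hU hsub
    rcases (Ultrafilter.union_mem_iff.mp this) with h | h
    · exact hns h
    · exact (Ultrafilter.compl_mem_iff_notMem.mp h) (hX σ hsup)
  refine ⟨h1, ?_⟩
  intro h2 hdist hnc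
  -- Part 2: the tree has at most countably many branches through Xstar
  have hcard : Cardinal.aleph 1 ≤ #Xstar := by
    by_contra hlt
    push_neg at hlt
    exact hnc ((countable_iff_lt_aleph_one _).mpr hlt)
  rw [← mk_out (Cardinal.aleph 1)] at hcard
  obtain ⟨ι⟩ := Cardinal.le_def _ _ |>.mp hcard
  set I := (Cardinal.aleph 1).out
  -- splitting points
  have hsplit : ∀ i j : I, i ≠ j → ∃ η, η < lam.ord ∧ f (ι i).1 η ≠ f (ι j).1 η := by
    intro i j hij
    have hne : ((ι i : Xstar) : K) ≠ ((ι j : Xstar) : K) := by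
      intro h
      exact hij (ι.injective (Subtype.ext h))
    have hXi := (ι i).2
    have hXj := (ι j).2
    by_contra hcon
    push_neg at hcon
    exact hne (hdist _ _ hXi hXj fun η hη => hcon η hη)
  set D : I → I → Ordinal.{0} := fun i j =>
    if h : i ≠ j then (hsplit i j h).choose else 0 with hD
  have hDlt : ∀ p : I × I, D p.1 p.2 < lam.ord := by
    intro p
    rw [hD]
    by_cases h : p.1 ≠ p.2
    · simp only [dif_pos h]
      exact (hsplit p.1 p.2 h).choose_spec.1
    · simp only [dif_neg h]
      exact hlimit.pos
  have hIcard : #(I × I) < lam.ord.cof := by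
    have : #(I × I) = Cardinal.aleph 1 := by
      have hI : #I = Cardinal.aleph 1 := mk_out _
      simp only [Cardinal.mk_prod, Cardinal.lift_id, hI]
      exact Cardinal.mul_eq_self (Cardinal.aleph0_le_aleph 1)
    rwa [this]
  have hsup : iSup (fun p : I × I => D p.1 p.2) < lam.ord :=
    Ordinal.iSup_lt_of_lt_cof hIcard hDlt
  set σ := iSup (fun p : I × I => D p.1 p.2) with hσ
  have hξ : σ + 1 < lam.ord := by rw [Ordinal.add_one_eq_succ]; exact hlimit.succ_lt hsup
  -- for each i, a node of T (σ+1) agreeing with f (ι i) below σ+1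
  have hnode : ∀ i : I, ∃ g ∈ T (σ + 1), ∀ η < σ + 1, g η = f (ι i).1 η :=
    fun i => (ι i).2 (σ + 1) hξ
  set G : I → (Ordinal.{0} → Bool) := fun i => (hnode i).choose with hG
  have hGmem : ∀ i, G i ∈ T (σ + 1) := fun i => (hnode i).choose_spec.1
  have hGagree : ∀ i, ∀ η < σ + 1, G i η = f (ι i).1 η :=
    fun i => (hnode i).choose_spec.2
  have hGinj : Function.Injective fun i => (⟨G i, hGmem i⟩ : T (σ + 1)) := by
    intro i j hij
    by_contra hne
    obtain ⟨hlt, hfne⟩ := (hsplit i j hne).choose_spec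
    have hDij : D i j = (hsplit i j hne).choose := dif_pos hne
    have hDle : D i j ≤ σ := Ordinal.le_iSup (fun p : I × I => D p.1 p.2) (i, j)
    have hηlt : (hsplit i j hne).choose < σ + 1 := by
      rw [← hDij]; exact hDle.trans_lt (Order.lt_succ σ)
    have h1 := hGagree i _ hηlt
    have h2' := hGagree j _ hηlt
    have : G i = G j := congrArg Subtype.val hij
    rw [this, h2'] at h1
    exact hfne h1.symm
  haveI hTc : Countable (T (σ + 1)) := (hTcount _ hξ).to_subtype
  have hIc : Countable I := hGinj.countable
  have : #I ≤ aleph0 := Cardinal.mk_le_aleph0_iff.mpr hIc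
  rw [mk_out] at this
  exact absurd this (not_le.mpr Cardinal.aleph0_lt_aleph_one)
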